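/- arXiv:2605.02304 — 3 statements merged into one kernel-verified Lean document; each statement's English description precedes it below -/
import Mathlib

section
/- Let (X,T) be a system, u a fixed minimal idempotent in a minimal left ideal M of βT, and define for A ⊆ uX the closure cl_{τ^[d]}(A) = {x ∈ uX : x^[d]_* ∈ u^[d]_*(u^[d]_* ∘ Δ^[d]_*(A))}, where ∘ is the circle operation for the face group F^[d]_* action on X^{2^d−1}. Then cl_{τ^[d]} is a closure operator: A ⊆ cl_{τ^[d]}(A), it is monotone, and cl_{τ^[d]}(cl_{τ^[d]}(A)) = cl_{τ^[d]}(A). -/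
attribute [local instance] Ultrafilter.mul Ultrafilter.semigroup

/-- Nonempty subsets of `[d]`: the starred coordinates of the `d`-cube. -/
def CubeStar (d : ℕ) : Type := {ε : Finset (Fin d) // ε.Nonempty}

/-- The starred face cube group of order `d` of the group `T`: the subgroup of
`T^{2^d-1}` generated by the elements `g^{(α)}`, `α` an upper facet. -/
def faceGroupStar (T : Type*) [Group T] (d : ℕ) : Subgroup (CubeStar d → T) :=
  Subgroup.closure {f | ∃ t : T, ∃ j : Fin d, f = fun ε => if j ∈ ε.1 then t else 1}

/-- The action of an ultrafilter `p ∈ βT` on a point of a compact Hausdorff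
`T`-space: `p x = lim_{t → p} t x`. -/
noncomputable def uact {T : Type*} [Group T] {X : Type*} [TopologicalSpace X]
    [MulAction T X] (p : Ultrafilter T) (x : X) : X :=
  @Filter.lim X _ ⟨x⟩ (Filter.map (fun t : T => t • x) (p : Filter T))

/-- The circle operation `u^[d]_* ∘ B` for the face group acting diagonally on
`X^{2^d-1}`: `z ∈ u∘B` iff there are nets `f_λ ∈ F^[d]_*` with `f_λ → u^[d]_*`
(coordinatewise in `βT`) and `b_λ ∈ B` with `f_λ b_λ → z`. -/
def circOp {T : Type*} [Group T] {X : Type*} [TopologicalSpace X] [MulAction T X]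
    (d : ℕ) (u : Ultrafilter T) (B : Set (CubeStar d → X)) : Set (CubeStar d → X) :=
  {z | (((fun _ => u) : CubeStar d → Ultrafilter T), z) ∈ closure
    {q : (CubeStar d → Ultrafilter T) × (CubeStar d → X) |
      ∃ f ∈ faceGroupStar T d, ∃ b ∈ B,
        q = (fun ε => (pure (f ε) : Ultrafilter T), fun ε => f ε • b ε)}}

/-- The `τ^[d]`-closure of `A ⊆ uX`:
`cl(A) = {x ∈ uX : x^[d]_* ∈ u^[d]_*(u^[d]_* ∘ Δ^[d]_*(A))}`. -/
noncomputable def clTau {T : Type*} [Group T] {X : Type*} [TopologicalSpace X]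
    [MulAction T X] (d : ℕ) (u : Ultrafilter T) (A : Set X) : Set X :=
  {x | x ∈ uact u '' (Set.univ : Set X) ∧
    (fun _ : CubeStar d => x) ∈
      (fun z : CubeStar d → X => fun ε => uact u (z ε)) ''
        circOp d u ((fun a : X => fun _ : CubeStar d => a) '' A)}

/-- `M` is a minimal left ideal of the semigroup `βT`. -/
def IsMinimalLeftIdeal {T : Type*} [Group T] (M : Set (Ultrafilter T)) : Prop :=
  (M.Nonempty ∧ ∀ p ∈ M, ∀ q : Ultrafilter T, q * p ∈ M) ∧
    ∀ N ⊆ M, (N.Nonempty ∧ ∀ p ∈ N, ∀ q : Ultrafilter T, q * p ∈ N) → N = M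

namespace ClTauAux

open Filter Topology Set

/-! ### Generalities on `uact` -/

section uactLemmas

variable {T : Type*} [Group T] {X : Type*} [TopologicalSpace X] [CompactSpace X]
  [T2Space X] [MulAction T X]

theorem tendsto_uact (p : Ultrafilter T) (x : X) :
    Filter.Tendsto (fun t : T => t • x) (p : Filter T) (𝓝 (uact p x)) := by
  obtain ⟨y, -, hy⟩ := isCompact_univ.ultrafilter_le_nhds
    (p.map (fun t : T => t • x)) (by rw [Filter.le_principal_iff]; exact Filter.univ_mem)
  rw [Ultrafilter.coe_map] at hy
  have : uact p x = y := by
    unfold uact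
    rw [Subsingleton.elim (⟨x⟩ : Nonempty X) ⟨y⟩]
    exact lim_eq hy
  rw [this]
  exact hy

theorem uact_eq_of_tendsto {p : Ultrafilter T} {x y : X}
    (h : Filter.Tendsto (fun t : T => t • x) (p : Filter T) (𝓝 y)) : uact p x = y :=
  tendsto_nhds_unique (tendsto_uact p x) h

theorem uact_pure (t : T) (x : X) : uact (pure t) x = t • x :=
  uact_eq_of_tendsto (by simpa using tendsto_pure_nhds (fun s : T => s • x) t)

theorem continuous_uact (x : X) : Continuous fun p : Ultrafilter T => uact p x := by
  have h : (fun p : Ultrafilter T => uact p x) = Ultrafilter.extend (fun t : T => t • x) := by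
    funext p
    refine (ultrafilter_extend_eq_iff.mpr ?_).symm
    rw [Ultrafilter.coe_map]
    exact tendsto_uact p x
  rw [h]
  exact continuous_ultrafilter_extend _

end uactLemmas

/-! ### Ultrafilter semigroup lemmas -/

section semigroupLemmas

variable {T : Type*} [Group T]

theorem pure_mul (t : T) (q : Ultrafilter T) :
    (pure t : Ultrafilter T) * q = q.map (fun s => t * s) := by
  apply Ultrafilter.coe_inj.mp
  apply Filter.ext'
  intro pr
  rw [Ultrafilter.eventually_mul]
  simp

theorem pure_mul_pure (t s : T) :
    (pure t : Ultrafilter T) * pure s = pure (t * s) := by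
  rw [pure_mul]
  simp

theorem mul_pure_one (p : Ultrafilter T) : p * (pure 1 : Ultrafilter T) = p := by
  apply Ultrafilter.coe_inj.mp
  apply Filter.ext'
  intro pr
  rw [Ultrafilter.eventually_mul]
  simp

theorem pure_one_mul (q : Ultrafilter T) : (pure 1 : Ultrafilter T) * q = q := by
  apply Ultrafilter.coe_inj.mp
  apply Filter.ext'
  intro pr
  rw [Ultrafilter.eventually_mul]
  simp

theorem continuous_umap (g : T → T) :
    Continuous (Ultrafilter.map g : Ultrafilter T → Ultrafilter T) := by
  refine ultrafilterBasis_is_basis.continuous_iff.2 ?_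
  rintro s ⟨A, rfl⟩
  simp only [Set.preimage_setOf_eq, Ultrafilter.mem_map]
  exact ultrafilter_isOpen_basic _

theorem continuous_pure_mul (t : T) :
    Continuous fun q : Ultrafilter T => (pure t : Ultrafilter T) * q := by
  have h : (fun q : Ultrafilter T => (pure t : Ultrafilter T) * q)
      = Ultrafilter.map (fun s => t * s) := by
    funext q; exact pure_mul t q
  rw [h]
  exact continuous_umap _

end semigroupLemmas

section uactMul

variable {T : Type*} [Group T] {X : Type*} [TopologicalSpace X] [CompactSpace X]
  [T2Space X] [MulAction T X]

theorem uact_mul (hc : ∀ t : T, Continuous fun x : X => t • x)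
    (p q : Ultrafilter T) (x : X) : uact (p * q) x = uact p (uact q x) := by
  have h1 : Continuous fun p : Ultrafilter T => uact (p * q) x :=
    (continuous_uact x).comp (Ultrafilter.continuous_mul_left q)
  have h2 : Continuous fun p : Ultrafilter T => uact p (uact q x) := continuous_uact _
  have key : (fun p : Ultrafilter T => uact (p * q) x) ∘ pure
      = (fun p : Ultrafilter T => uact p (uact q x)) ∘ pure := by
    funext t
    show uact ((pure t) * q) x = uact (pure t) (uact q x)
    rw [pure_mul, uact_pure]
    apply uact_eq_of_tendsto
    rw [Ultrafilter.coe_map, Filter.tendsto_map'_iff]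
    have hcomp : ((fun s : T => s • x) ∘ fun s : T => t * s)
        = (fun y : X => t • y) ∘ (fun s : T => s • x) := by
      funext s; simp [mul_smul]
    rw [hcomp]
    exact (((hc t).tendsto _).comp (tendsto_uact q x))
  have := DenseRange.equalizer denseRange_pure h1 h2 key
  exact congrFun this p

theorem uact_fix (hc : ∀ t : T, Continuous fun x : X => t • x)
    {u : Ultrafilter T} (hidem : u * u = u) {a : X}
    (ha : a ∈ uact u '' (Set.univ : Set X)) : uact u a = a := by
  obtain ⟨y, -, rfl⟩ := ha
  rw [← uact_mul hc, hidem]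

end uactMul

/-! ### The face group closure in `(βT)^E` -/

section faceClosure

variable {T : Type*} [Group T] (d : ℕ)

/-- Pure points of the face group in `(βT)^{CubeStar d}`. -/
def GPure (T : Type*) [Group T] (d : ℕ) : Set (CubeStar d → Ultrafilter T) :=
  {g | ∃ f ∈ faceGroupStar T d, g = fun ε => (pure (f ε) : Ultrafilter T)}

theorem mul_mem_closure_GPure {g₁ g₂ : CubeStar d → Ultrafilter T}
    (h₁ : g₁ ∈ closure (GPure T d)) (h₂ : g₂ ∈ closure (GPure T d)) :
    (fun ε => g₁ ε * g₂ ε) ∈ closure (GPure T d) := by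
  have b1 : ∀ f ∈ faceGroupStar T d, ∀ g ∈ closure (GPure T d),
      (fun ε => (pure (f ε) : Ultrafilter T) * g ε) ∈ closure (GPure T d) := by
    intro f hf g hg
    have hcont : Continuous fun (g : CubeStar d → Ultrafilter T) =>
        fun ε => (pure (f ε) : Ultrafilter T) * g ε :=
      continuous_pi fun ε => (continuous_pure_mul (f ε)).comp (continuous_apply ε)
    have himg : (fun (g : CubeStar d → Ultrafilter T) =>
        fun ε => (pure (f ε) : Ultrafilter T) * g ε) '' (GPure T d) ⊆ GPure T d := by
      rintro _ ⟨g', ⟨h', hh', rfl⟩, rfl⟩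
      refine ⟨f * h', mul_mem hf hh', ?_⟩
      funext ε
      simp [pure_mul_pure, Pi.mul_apply]
    exact ((image_closure_subset_closure_image hcont).trans (closure_mono himg)) ⟨g, hg, rfl⟩
  have hcont2 : Continuous fun (g : CubeStar d → Ultrafilter T) => fun ε => g ε * g₂ ε :=
    continuous_pi fun ε => (Ultrafilter.continuous_mul_left (g₂ ε)).comp (continuous_apply ε)
  have himg2 : (fun (g : CubeStar d → Ultrafilter T) => fun ε => g ε * g₂ ε) ''
      (GPure T d) ⊆ closure (GPure T d) := by
    rintro _ ⟨g', ⟨h', hh', rfl⟩, rfl⟩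
    exact b1 h' hh' g₂ h₂
  have hfinal : (fun (g : CubeStar d → Ultrafilter T) => fun ε => g ε * g₂ ε) ''
      closure (GPure T d) ⊆ closure (GPure T d) := by
    refine (image_closure_subset_closure_image hcont2).trans ?_
    have := closure_mono himg2
    rwa [closure_closure] at this
  exact hfinal ⟨g₁, h₁, rfl⟩

theorem gen_mem_closure_GPure (u : Ultrafilter T) (j : Fin d) :
    (fun ε : CubeStar d => if j ∈ ε.1 then u else (pure 1 : Ultrafilter T))
      ∈ closure (GPure T d) := by
  have hcont : Continuous fun (p : Ultrafilter T) =>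
      fun ε : CubeStar d => if j ∈ ε.1 then p else (pure 1 : Ultrafilter T) := by
    refine continuous_pi fun ε => ?_
    by_cases h : j ∈ ε.1
    · simpa [h] using (continuous_id' : Continuous fun p : Ultrafilter T => p)
    · simpa [h] using (continuous_const : Continuous fun _ : Ultrafilter T => (pure 1 : Ultrafilter T))
  have himg : (fun (p : Ultrafilter T) =>
      fun ε : CubeStar d => if j ∈ ε.1 then p else (pure 1 : Ultrafilter T)) ''
      Set.range (pure : T → Ultrafilter T) ⊆ GPure T d := by
    rintro _ ⟨_, ⟨t, rfl⟩, rfl⟩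
    refine ⟨fun ε => if j ∈ ε.1 then t else 1, Subgroup.subset_closure ⟨t, j, rfl⟩, ?_⟩
    funext ε
    by_cases h : j ∈ ε.1 <;> simp [h]
  have hu : u ∈ closure (Set.range (pure : T → Ultrafilter T)) := denseRange_pure u
  exact ((image_closure_subset_closure_image hcont).trans (closure_mono himg)) ⟨u, hu, rfl⟩

theorem one_mem_GPure : (fun _ : CubeStar d => (pure (1 : T) : Ultrafilter T)) ∈ GPure T d := by
  refine ⟨1, one_mem _, ?_⟩
  funext ε
  simp

theorem ubar_mem_closure_GPure (u : Ultrafilter T) (hidem : u * u = u) :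
    (fun _ : CubeStar d => u) ∈ closure (GPure T d) := by
  have key : ∀ l : List (Fin d), ∃ g ∈ closure (GPure T d), ∀ ε : CubeStar d,
      (g ε = u ∧ ∃ j ∈ l, j ∈ ε.1) ∨ (g ε = pure 1 ∧ ∀ j ∈ l, j ∉ ε.1) := by
    intro l
    induction l with
    | nil =>
      exact ⟨_, subset_closure (one_mem_GPure d), fun ε => Or.inr ⟨rfl, by simp⟩⟩
    | cons j l ih =>
      obtain ⟨g, hg, hprop⟩ := ih
      refine ⟨fun ε => (if j ∈ ε.1 then u else (pure 1 : Ultrafilter T)) * g ε,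
        mul_mem_closure_GPure d (gen_mem_closure_GPure d u j) hg, fun ε => ?_⟩
      by_cases hj : j ∈ ε.1
      · rcases hprop ε with ⟨h1, _⟩ | ⟨h1, _⟩
        · exact Or.inl ⟨by simp [hj, h1, hidem], j, by simp, hj⟩
        · exact Or.inl ⟨by simp [hj, h1, mul_pure_one], j, by simp, hj⟩
      · rcases hprop ε with ⟨h1, hex⟩ | ⟨h1, hall⟩
        · refine Or.inl ⟨by simp [hj, h1, pure_one_mul], ?_⟩
          obtain ⟨j', hj'l, hj'⟩ := hex
          exact ⟨j', by simp [hj'l], hj'⟩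
        · refine Or.inr ⟨by simp [hj, h1, pure_mul_pure], ?_⟩
          intro j'' hj''
          rcases List.mem_cons.mp hj'' with rfl | h
          · exact hj
          · exact hall _ h
  obtain ⟨g, hg, hprop⟩ := key (List.finRange d)
  have hgeq : g = fun _ => u := by
    funext ε
    rcases hprop ε with ⟨h1, _⟩ | ⟨h1, hall⟩
    · exact h1
    · obtain ⟨j, hj⟩ := ε.2
      exact absurd hj (hall j (List.mem_finRange j))
  rwa [hgeq] at hg

end faceClosure

/-! ### circOp lemmas -/

section circLemmas

variable {T : Type*} [Group T] {X : Type*} [TopologicalSpace X] [CompactSpace X]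
  [T2Space X] [MulAction T X] (d : ℕ) (u : Ultrafilter T)

/-- The generating set in `circOp`. -/
def Sset (T : Type*) [Group T] (X : Type*) [TopologicalSpace X] [MulAction T X]
    (d : ℕ) (B : Set (CubeStar d → X)) :
    Set ((CubeStar d → Ultrafilter T) × (CubeStar d → X)) :=
  {q : (CubeStar d → Ultrafilter T) × (CubeStar d → X) |
    ∃ f ∈ faceGroupStar T d, ∃ b ∈ B,
      q = (fun ε => (pure (f ε) : Ultrafilter T), fun ε => f ε • b ε)}

theorem mem_circOp_iff {B : Set (CubeStar d → X)} {z : CubeStar d → X} :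
    z ∈ circOp d u B ↔
      (((fun _ => u) : CubeStar d → Ultrafilter T), z) ∈ closure (Sset T X d B) :=
  Iff.rfl

theorem circOp_mono {B B' : Set (CubeStar d → X)} (h : B ⊆ B') :
    circOp d u B ⊆ circOp d u B' := by
  intro z hz
  rw [mem_circOp_iff] at hz ⊢
  refine closure_mono ?_ hz
  rintro q ⟨f, hf, b, hb, rfl⟩
  exact ⟨f, hf, b, h hb, rfl⟩

theorem uact_diag_mem_circOp (hc : ∀ t : T, Continuous fun x : X => t • x)
    (hidem : u * u = u) (D : Set (CubeStar d → X)) {w : CubeStar d → X} (hw : w ∈ D) :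
    (fun ε => uact u (w ε)) ∈ circOp d u D := by
  have hΦ : Continuous fun (g : CubeStar d → Ultrafilter T) =>
      ((g, fun ε => uact (g ε) (w ε)) :
        (CubeStar d → Ultrafilter T) × (CubeStar d → X)) :=
    continuous_id.prodMk
      (continuous_pi fun ε => (continuous_uact (w ε)).comp (continuous_apply ε))
  have himg : (fun (g : CubeStar d → Ultrafilter T) =>
      ((g, fun ε => uact (g ε) (w ε)) :
        (CubeStar d → Ultrafilter T) × (CubeStar d → X))) '' GPure T d
      ⊆ Sset T X d D := by
    rintro _ ⟨_, ⟨f, hf, rfl⟩, rfl⟩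
    refine ⟨f, hf, w, hw, ?_⟩
    simp only [Prod.mk.injEq, true_and]
    funext ε
    exact uact_pure (f ε) (w ε)
  rw [mem_circOp_iff]
  exact ((image_closure_subset_closure_image hΦ).trans (closure_mono himg))
    ⟨_, ubar_mem_closure_GPure d u hidem, rfl⟩

theorem substep (hc : ∀ t : T, Continuous fun x : X => t • x)
    {B : Set (CubeStar d → X)} {f : CubeStar d → T} (hf : f ∈ faceGroupStar T d)
    {c : CubeStar d → X} (hcB : c ∈ circOp d u B) :
    (((fun ε => (pure (f ε) : Ultrafilter T) * u) : CubeStar d → Ultrafilter T),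
      (fun ε => f ε • c ε : CubeStar d → X)) ∈ closure (Sset T X d B) := by
  have hΘ : Continuous fun q : (CubeStar d → Ultrafilter T) × (CubeStar d → X) =>
      (((fun ε => (pure (f ε) : Ultrafilter T) * q.1 ε) : CubeStar d → Ultrafilter T),
        ((fun ε => f ε • q.2 ε) : CubeStar d → X)) := by
    apply Continuous.prodMk
    · exact continuous_pi fun ε =>
        (continuous_pure_mul (f ε)).comp ((continuous_apply ε).comp continuous_fst)
    · exact continuous_pi fun ε =>
        (hc (f ε)).comp ((continuous_apply ε).comp continuous_snd)
  have himg : (fun q : (CubeStar d → Ultrafilter T) × (CubeStar d → X) =>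
      (((fun ε => (pure (f ε) : Ultrafilter T) * q.1 ε) : CubeStar d → Ultrafilter T),
        ((fun ε => f ε • q.2 ε) : CubeStar d → X))) '' Sset T X d B
      ⊆ Sset T X d B := by
    rintro _ ⟨_, ⟨h, hh, b, hb, rfl⟩, rfl⟩
    refine ⟨f * h, mul_mem hf hh, b, hb, ?_⟩
    simp only [Prod.mk.injEq]
    constructor
    · funext ε
      simp [pure_mul_pure, Pi.mul_apply]
    · funext ε
      simp [Pi.mul_apply, mul_smul]
  rw [mem_circOp_iff] at hcB
  exact ((image_closure_subset_closure_image hΘ).trans (closure_mono himg))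
    ⟨_, hcB, rfl⟩

theorem circOp_circOp_subset (hc : ∀ t : T, Continuous fun x : X => t • x)
    (hidem : u * u = u) (B : Set (CubeStar d → X)) :
    circOp d u (circOp d u B) ⊆ circOp d u B := by
  intro z hz
  rw [mem_circOp_iff] at hz ⊢
  have hR : Continuous fun q : (CubeStar d → Ultrafilter T) × (CubeStar d → X) =>
      (((fun ε => q.1 ε * u) : CubeStar d → Ultrafilter T), q.2) :=
    (continuous_pi fun ε =>
      (Ultrafilter.continuous_mul_left u).comp
        ((continuous_apply ε).comp continuous_fst)).prodMk continuous_snd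
  have himg : (fun q : (CubeStar d → Ultrafilter T) × (CubeStar d → X) =>
      (((fun ε => q.1 ε * u) : CubeStar d → Ultrafilter T), q.2)) ''
      Sset T X d (circOp d u B) ⊆ closure (Sset T X d B) := by
    rintro _ ⟨_, ⟨f, hf, c, hcB, rfl⟩, rfl⟩
    exact substep d u hc hf hcB
  have hfinal : (fun q : (CubeStar d → Ultrafilter T) × (CubeStar d → X) =>
      (((fun ε => q.1 ε * u) : CubeStar d → Ultrafilter T), q.2)) ''
      closure (Sset T X d (circOp d u B)) ⊆ closure (Sset T X d B) := by
    refine (image_closure_subset_closure_image hR).trans ?_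
    have := closure_mono himg
    rwa [closure_closure] at this
  have h2 : (((fun _ : CubeStar d => u * u) : CubeStar d → Ultrafilter T), z)
      ∈ closure (Sset T X d B) := hfinal ⟨_, hz, rfl⟩
  have heq : ((fun _ : CubeStar d => u * u) : CubeStar d → Ultrafilter T)
      = fun _ : CubeStar d => u := by
    funext ε; rw [hidem]
  rwa [show ((fun _ : CubeStar d => u * u) : CubeStar d → Ultrafilter T)
      = fun _ : CubeStar d => u from heq] at h2

end circLemmas

end ClTauAux

open ClTauAux

/-- The `τ^[d]`-closure is a closure operator on subsets of `uX`. -/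
theorem clTau_is_closure_operator
    {T : Type*} [Group T] {X : Type*} [TopologicalSpace X] [CompactSpace X]
    [T2Space X] [MulAction T X] (hc : ∀ t : T, Continuous fun x : X => t • x)
    (d : ℕ) (M : Set (Ultrafilter T)) (hM : IsMinimalLeftIdeal M)
    (u : Ultrafilter T) (hu : u ∈ M) (hidem : u * u = u) :
    (∀ A : Set X, A ⊆ uact u '' Set.univ → A ⊆ clTau d u A) ∧
    (∀ A B : Set X, A ⊆ B → B ⊆ uact u '' Set.univ → clTau d u A ⊆ clTau d u B) ∧
    (∀ A : Set X, A ⊆ uact u '' Set.univ → clTau d u (clTau d u A) = clTau d u A) := by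
  have hext : ∀ A : Set X, A ⊆ uact u '' Set.univ → A ⊆ clTau d u A := by
    intro A hA a ha
    have haU : a ∈ uact u '' Set.univ := hA ha
    have hfa : uact u a = a := uact_fix hc hidem haU
    have hmem : (fun _ : CubeStar d => a) ∈
        circOp d u ((fun a : X => fun _ : CubeStar d => a) '' A) := by
      have := uact_diag_mem_circOp d u hc hidem
        ((fun a : X => fun _ : CubeStar d => a) '' A)
        (w := fun _ : CubeStar d => a) ⟨a, ha, rfl⟩
      simpa [hfa] using this
    refine ⟨haU, (fun _ : CubeStar d => a), hmem, ?_⟩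
    funext ε
    exact hfa
  have hmono : ∀ A B : Set X, A ⊆ B → B ⊆ uact u '' Set.univ →
      clTau d u A ⊆ clTau d u B := by
    intro A B hAB _ x hx
    obtain ⟨hxU, z, hz, hzx⟩ := hx
    exact ⟨hxU, z, circOp_mono d u (Set.image_mono hAB) hz, hzx⟩
  refine ⟨hext, hmono, ?_⟩
  intro A hA
  apply Set.Subset.antisymm
  · rintro x ⟨hxU, z, hz, hzx⟩
    refine ⟨hxU, z, ?_, hzx⟩
    have h1 : (fun a : X => fun _ : CubeStar d => a) '' (clTau d u A) ⊆
        circOp d u (circOp d u ((fun a : X => fun _ : CubeStar d => a) '' A)) := by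
      rintro _ ⟨y, hy, rfl⟩
      obtain ⟨-, w, hw, hwy⟩ := hy
      have := uact_diag_mem_circOp d u hc hidem
        (circOp d u ((fun a : X => fun _ : CubeStar d => a) '' A)) hw
      have hwy' : (fun ε => uact u (w ε)) = (fun _ : CubeStar d => y) := hwy
      rwa [hwy'] at this
    have h2 := circOp_mono d u h1 hz
    exact circOp_circOp_subset d u hc hidem _
      (circOp_circOp_subset d u hc hidem _ h2)
  · exact hext (clTau d u A) (fun x hx => hx.1)
end

section
/- Left multiplication in G = uM is a homeomorphism of G onto itself with respect to the τ^[d]-topology: for every g ∈ G and every τ^[d]-closed subset A ⊆ G, Ag is τ^[d]-closed. -/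
attribute [local instance] Ultrafilter.mul Ultrafilter.semigroup

section Helpers

variable {T : Type*} [Group T] {M : Set (Ultrafilter T)} {u : Ultrafilter T}

lemma mli_isClosed (hM : IsMinimalLeftIdeal M) : IsClosed M := by
  obtain ⟨⟨⟨p, hp⟩, hid⟩, hmin⟩ := hM
  have hr : Set.range (fun q : Ultrafilter T => q * p) = M := by
    apply hmin
    · rintro _ ⟨q, rfl⟩; exact hid p hp q
    · exact ⟨⟨p * p, p, rfl⟩, by rintro _ ⟨q, rfl⟩ q'; exact ⟨q' * q, mul_assoc q' q p⟩⟩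
  rw [← hr, ← Set.image_univ]
  exact (isCompact_univ.image (Ultrafilter.continuous_mul_left p)).isClosed

lemma mli_right_id (hM : IsMinimalLeftIdeal M) (hu : u ∈ M) (hidem : u * u = u) :
    ∀ p ∈ M, p * u = p := by
  obtain ⟨⟨hne, hid⟩, hmin⟩ := hM
  have hr : {p ∈ M | p * u = p} = M := by
    apply hmin _ (Set.sep_subset _ _)
    refine ⟨⟨u, hu, hidem⟩, ?_⟩
    rintro p ⟨hpM, hpu⟩ q
    exact ⟨hid p hpM q, by rw [mul_assoc, hpu]⟩
  intro p hp; rw [← hr] at hp; exact hp.2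

lemma mli_surj (hM : IsMinimalLeftIdeal M) {g : Ultrafilter T} (hg : g ∈ M) :
    ∀ p ∈ M, ∃ q, q * g = p := by
  obtain ⟨⟨hne, hid⟩, hmin⟩ := hM
  have hr : Set.range (fun q : Ultrafilter T => q * g) = M := by
    apply hmin
    · rintro _ ⟨q, rfl⟩; exact hid g hg q
    · exact ⟨⟨g * g, g, rfl⟩, by rintro _ ⟨q, rfl⟩ q'; exact ⟨q' * q, mul_assoc q' q g⟩⟩
  intro p hp; rw [← hr] at hp; exact hp

lemma mli_leftinv (hM : IsMinimalLeftIdeal M) (hu : u ∈ M) (hidem : u * u = u)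
    {g : Ultrafilter T} (hgM : g ∈ M) (hug : u * g = g) :
    ∃ g', g' ∈ M ∧ u * g' = g' ∧ g' * g = u := by
  obtain ⟨m, hm⟩ := mli_surj hM hgM u hu
  refine ⟨u * (m * u), hM.1.2 _ (hM.1.2 u hu m) u, by rw [← mul_assoc, hidem], ?_⟩
  calc u * (m * u) * g = u * (m * (u * g)) := by rw [mul_assoc, mul_assoc]
    _ = u * u := by rw [hug, hm]
    _ = u := hidem

lemma mli_inv (hM : IsMinimalLeftIdeal M) (hu : u ∈ M) (hidem : u * u = u)
    {g : Ultrafilter T} (hgM : g ∈ M) (hug : u * g = g) :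
    ∃ g', g' ∈ M ∧ u * g' = g' ∧ g' * g = u ∧ g * g' = u := by
  obtain ⟨g', h1, h2, h3⟩ := mli_leftinv hM hu hidem hgM hug
  obtain ⟨g'', k1, k2, k3⟩ := mli_leftinv hM hu hidem h1 h2
  refine ⟨g', h1, h2, h3, ?_⟩
  calc g * g' = (u * g) * g' := by rw [hug]
    _ = ((g'' * g') * g) * g' := by rw [k3]
    _ = g'' * ((g' * g) * g') := by rw [mul_assoc, mul_assoc, mul_assoc]
    _ = g'' * g' := by rw [h3, h2]
    _ = u := k3

end Helpers

/-- The circle operation `u^[d]_* ∘ B` for the face group acting on `(βT)^{2^d-1}`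
by left multiplication. -/
def circOpM {T : Type*} [Group T] (d : ℕ) (u : Ultrafilter T)
    (B : Set (CubeStar d → Ultrafilter T)) : Set (CubeStar d → Ultrafilter T) :=
  {z | (((fun _ => u) : CubeStar d → Ultrafilter T), z) ∈ closure
    {q : (CubeStar d → Ultrafilter T) × (CubeStar d → Ultrafilter T) |
      ∃ f ∈ faceGroupStar T d, ∃ b ∈ B,
        q = (fun ε => (pure (f ε) : Ultrafilter T), fun ε => (pure (f ε) : Ultrafilter T) * b ε)}}

section Circ

variable {T : Type*} [Group T]

/-- the generating set -/
def genS (d : ℕ) (A : Set (Ultrafilter T)) :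
    Set ((CubeStar d → Ultrafilter T) × (CubeStar d → Ultrafilter T)) :=
  {q | ∃ f ∈ faceGroupStar T d,
    ∃ b ∈ (fun a : Ultrafilter T => fun _ : CubeStar d => a) '' A,
      q = (fun ε => (pure (f ε) : Ultrafilter T), fun ε => (pure (f ε) : Ultrafilter T) * b ε)}

lemma circOpM_eq (d : ℕ) (u : Ultrafilter T) (A : Set (Ultrafilter T)) :
    circOpM d u ((fun a : Ultrafilter T => fun _ : CubeStar d => a) '' A) =
      {z | (((fun _ => u) : CubeStar d → Ultrafilter T), z) ∈ closure (genS d A)} := rfl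

lemma genS_mul (d : ℕ) (g : Ultrafilter T) (A : Set (Ultrafilter T)) :
    genS d ((fun a => a * g) '' A) =
      (fun q : (CubeStar d → Ultrafilter T) × (CubeStar d → Ultrafilter T) =>
        (q.1, fun ε => q.2 ε * g)) '' genS d A := by
  ext q
  constructor
  · rintro ⟨f, hf, _, ⟨_, ⟨a, ha, rfl⟩, rfl⟩, rfl⟩
    refine ⟨(fun ε => (pure (f ε) : Ultrafilter T),
        fun ε => (pure (f ε) : Ultrafilter T) * (fun _ : CubeStar d => a) ε),
      ⟨f, hf, (fun _ : CubeStar d => a), ⟨a, ha, rfl⟩, rfl⟩, ?_⟩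
    simp only [Prod.mk.injEq, true_and]
    exact funext fun ε => mul_assoc _ _ _
  · rintro ⟨_, ⟨f, hf, _, ⟨a, ha, rfl⟩, rfl⟩, rfl⟩
    refine ⟨f, hf, (fun _ : CubeStar d => a * g), ⟨a * g, ⟨a, ha, rfl⟩, rfl⟩, ?_⟩
    simp only [Prod.mk.injEq, true_and]
    exact funext fun ε => mul_assoc _ _ _

lemma circOpM_mul (d : ℕ) (u g : Ultrafilter T) (A : Set (Ultrafilter T)) :
    circOpM d u ((fun a : Ultrafilter T => fun _ : CubeStar d => a) '' ((fun a => a * g) '' A)) =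
      (fun z : CubeStar d → Ultrafilter T => fun ε => z ε * g) ''
        circOpM d u ((fun a : Ultrafilter T => fun _ : CubeStar d => a) '' A) := by
  set φ : (CubeStar d → Ultrafilter T) × (CubeStar d → Ultrafilter T) →
      (CubeStar d → Ultrafilter T) × (CubeStar d → Ultrafilter T) :=
    fun q => (q.1, fun ε => q.2 ε * g) with hφ
  have hφc : Continuous φ := by
    refine continuous_fst.prodMk (continuous_pi fun ε => ?_)
    exact (Ultrafilter.continuous_mul_left g).comp ((continuous_apply ε).comp continuous_snd)
  have hcl : closure (genS d ((fun a => a * g) '' A)) = φ '' closure (genS d A) := by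
    rw [genS_mul]
    refine Set.Subset.antisymm
      (closure_minimal (Set.image_mono subset_closure)
        ((isClosed_closure.isCompact.image hφc).isClosed))
      (image_closure_subset_closure_image hφc)
  rw [circOpM_eq, circOpM_eq]
  ext z
  simp only [Set.mem_setOf_eq, hcl, Set.mem_image]
  constructor
  · rintro ⟨q, hq, hq2⟩
    have h1 : q.1 = (fun _ => u) := congrArg Prod.fst hq2
    have h2 : (fun ε => q.2 ε * g) = z := congrArg Prod.snd hq2
    have h3 : (((fun _ => u) : CubeStar d → Ultrafilter T), q.2) = q := Prod.ext h1.symm rfl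
    exact ⟨q.2, h3 ▸ hq, h2⟩
  · rintro ⟨z₀, hz₀, rfl⟩
    exact ⟨((fun _ => u), z₀), hz₀, rfl⟩

lemma circOpM_mem (d : ℕ) (u : Ultrafilter T) {M : Set (Ultrafilter T)}
    (hM : IsMinimalLeftIdeal M) {A : Set (Ultrafilter T)} (hA : A ⊆ M)
    {z : CubeStar d → Ultrafilter T}
    (hz : z ∈ circOpM d u ((fun a : Ultrafilter T => fun _ : CubeStar d => a) '' A)) :
    ∀ ε, z ε ∈ M := by
  rw [circOpM_eq] at hz
  have hC : IsClosed {q : (CubeStar d → Ultrafilter T) × (CubeStar d → Ultrafilter T) |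
      ∀ ε, q.2 ε ∈ M} := by
    rw [Set.setOf_forall]
    exact isClosed_iInter fun ε =>
      (mli_isClosed hM).preimage ((continuous_apply ε).comp continuous_snd)
  have hsub : genS d A ⊆ {q | ∀ ε, q.2 ε ∈ M} := by
    rintro _ ⟨f, hf, _, ⟨a, ha, rfl⟩, rfl⟩ ε
    exact hM.1.2 a (hA ha) (pure (f ε))
  exact (closure_minimal hsub hC) hz

end Circ

/-- The `τ^[d]`-closure of a subset `A` of `G = uM`:
`cl(A) = {g ∈ G : g^[d]_* ∈ u^[d]_*(u^[d]_* ∘ Δ^[d]_*(A))}`. -/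
def clTauG {T : Type*} [Group T] (d : ℕ) (M : Set (Ultrafilter T)) (u : Ultrafilter T)
    (A : Set (Ultrafilter T)) : Set (Ultrafilter T) :=
  {g | g ∈ (fun p => u * p) '' M ∧
    (fun _ : CubeStar d => g) ∈
      (fun z : CubeStar d → Ultrafilter T => fun ε => u * z ε) ''
        circOpM d u ((fun a : Ultrafilter T => fun _ : CubeStar d => a) '' A)}

/-- Left multiplication in `G = uM` is a `τ^[d]`-homeomorphism: for every `g ∈ G`
and every `τ^[d]`-closed `A ⊆ G`, the translate `Ag` is `τ^[d]`-closed. -/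
theorem left_multiplication_tau_d_homeomorphism
    {T : Type*} [Group T] (d : ℕ) (M : Set (Ultrafilter T))
    (hM : IsMinimalLeftIdeal M) (u : Ultrafilter T) (hu : u ∈ M) (hidem : u * u = u)
    (g : Ultrafilter T) (hg : g ∈ (fun p => u * p) '' M)
    (A : Set (Ultrafilter T)) (hA : A ⊆ (fun p => u * p) '' M)
    (hAclosed : clTauG d M u A = A) :
    clTauG d M u ((fun a => a * g) '' A) = (fun a => a * g) '' A := by
  have hid := hM.1.2
  have memG : ∀ {x : Ultrafilter T}, x ∈ (fun p => u * p) '' M ↔ x ∈ M ∧ u * x = x := by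
    intro x
    constructor
    · rintro ⟨m, hm, rfl⟩
      exact ⟨hid m hm u, by rw [← mul_assoc, hidem]⟩
    · rintro ⟨h1, h2⟩; exact ⟨x, h1, h2⟩
  obtain ⟨hgM, hug⟩ := memG.mp hg
  obtain ⟨g', hg'M, hug', hg'g, hgg'⟩ := mli_inv hM hu hidem hgM hug
  have hAM : A ⊆ M := fun a ha => (memG.mp (hA ha)).1
  have rid := mli_right_id hM hu hidem
  ext h
  constructor
  · rintro ⟨hhG, w, hw, hwh⟩
    rw [circOpM_mul] at hw
    obtain ⟨z₀, hz₀, rfl⟩ := hw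
    obtain ⟨hhM, huh⟩ := memG.mp hhG
    have haM : h * g' ∈ M := hid g' hg'M h
    have hua : u * (h * g') = h * g' := by rw [← mul_assoc, huh]
    have hag : (h * g') * g = h := by rw [mul_assoc, hg'g, rid h hhM]
    have hzM : ∀ ε, z₀ ε ∈ M := circOpM_mem d u hM hAM hz₀
    have hkey : ∀ ε : CubeStar d, u * z₀ ε = h * g' := by
      intro ε
      have h0 : u * (z₀ ε * g) = h := congrFun hwh ε
      have h1 : (u * z₀ ε) * g = h := by rw [mul_assoc, h0]
      have h2 : u * z₀ ε ∈ M := hid (z₀ ε) (hzM ε) u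
      calc u * z₀ ε = (u * z₀ ε) * u := (rid _ h2).symm
        _ = (u * z₀ ε) * (g * g') := by rw [hgg']
        _ = ((u * z₀ ε) * g) * g' := (mul_assoc _ _ _).symm
        _ = h * g' := by rw [h1]
    have haCl : h * g' ∈ clTauG d M u A :=
      ⟨memG.mpr ⟨haM, hua⟩, z₀, hz₀, funext fun ε => hkey ε⟩
    rw [hAclosed] at haCl
    exact ⟨h * g', haCl, hag⟩
  · rintro ⟨a, haA, rfl⟩
    have haCl : a ∈ clTauG d M u A := by rw [hAclosed]; exact haA
    obtain ⟨haG, z₀, hz₀, hza⟩ := haCl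
    obtain ⟨haM, hua⟩ := memG.mp haG
    refine ⟨memG.mpr ⟨hid g hgM a, by rw [← mul_assoc, hua]⟩,
      fun ε => z₀ ε * g, ?_, ?_⟩
    · rw [circOpM_mul]; exact ⟨z₀, hz₀, rfl⟩
    · funext ε
      have h0 : u * z₀ ε = a := congrFun hza ε
      show u * (z₀ ε * g) = a * g
      rw [← mul_assoc, h0]
end

section
/- Let π:(X,T)→(Y,T) be a factor map between minimal systems, and let π_u be the restriction of π to uX. Then: (i) π_u is continuous for the τ^[d]-topologies on uX and uY; (ii) π_u is a τ^[d]-homeomorphism if and only if π is a proximal factor. -/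
attribute [local instance] Ultrafilter.mul Ultrafilter.semigroup

/-- Proximality of a pair: the orbit closure of `(x, y)` meets the diagonal. -/
def IsProximal (T : Type*) [Group T] {X : Type*} [TopologicalSpace X] [MulAction T X]
    (x y : X) : Prop :=
  ∃ z : X, (z, z) ∈ closure {q : X × X | ∃ t : T, q = (t • x, t • y)}

section Aux

open Filter Topology Set

set_option linter.unusedSectionVars false

variable {T : Type*} [Group T] {X : Type*} [TopologicalSpace X] [CompactSpace X]
  [T2Space X] [MulAction T X]

theorem uact_tendsto (p : Ultrafilter T) (x : X) :
    Filter.Tendsto (fun t : T => t • x) ↑p (nhds (uact p x)) := by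
  obtain ⟨a, -, ha⟩ := isCompact_univ.ultrafilter_le_nhds
    (p.map (fun t : T => t • x)) (by simp)
  rw [Ultrafilter.coe_map] at ha
  exact le_nhds_lim ⟨a, ha⟩

theorem uact_eq {p : Ultrafilter T} {x a : X}
    (h : Filter.Tendsto (fun t : T => t • x) ↑p (nhds a)) : uact p x = a :=
  tendsto_nhds_unique (uact_tendsto p x) h

/-- Continuous equivariant maps commute with the ultrafilter action. -/
theorem uact_comm {Y : Type*} [TopologicalSpace Y] [CompactSpace Y] [T2Space Y]
    [MulAction T Y] (g : X → Y) (hg : Continuous g)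
    (hgeq : ∀ t : T, ∀ x : X, g (t • x) = t • g x) (p : Ultrafilter T) (x : X) :
    g (uact p x) = uact p (g x) := by
  refine (uact_eq ?_).symm
  have h := (hg.tendsto (uact p x)).comp (uact_tendsto p x)
  have heq : (g ∘ fun t : T => t • x) = fun t : T => t • g x := by
    funext t; exact hgeq t x
  rwa [heq] at h

/-- The action of a product of ultrafilters is the composition of the actions. -/
theorem uact_mul (hcX : ∀ t : T, Continuous fun x : X => t • x)
    (p q : Ultrafilter T) (x : X) : uact (p * q) x = uact p (uact q x) := by
  apply uact_eq
  rw [tendsto_nhds]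
  intro s hs hmem
  have key : ∀ᶠ m in (p : Filter T), ∀ᶠ m' in (q : Filter T), (m * m') • x ∈ s := by
    have h1 : ∀ᶠ a in (p : Filter T), a • uact q x ∈ s :=
      (uact_tendsto p (uact q x)).eventually (hs.eventually_mem hmem)
    filter_upwards [h1] with a ha
    have ht : Filter.Tendsto (fun b : T => a • (b • x)) ↑q (nhds (a • uact q x)) :=
      ((hcX a).tendsto _).comp (uact_tendsto q x)
    have h2 : ∀ᶠ b in (q : Filter T), a • (b • x) ∈ s :=
      ht.eventually (hs.eventually_mem ha)
    filter_upwards [h2] with b hb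
    rwa [mul_smul]
  exact (Ultrafilter.eventually_mul p q (fun m : T => m • x ∈ s)).mpr key

/-- A proximal pair is collapsed by some element of `βT`. -/
theorem exists_uact_eq_of_proximal {x x' : X} (h : IsProximal T x x') :
    ∃ p : Ultrafilter T, uact p x = uact p x' := by
  classical
  obtain ⟨z, hz⟩ := h
  obtain ⟨G, hSG, hG⟩ := mem_closure_iff_ultrafilter.mp hz
  set ψ : X × X → T := fun q =>
    if h : ∃ t : T, q = (t • x, t • x') then h.choose else 1 with hψdef
  have hψS : ∀ q : X × X, (∃ t : T, q = (t • x, t • x')) →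
      ψ q • x = q.1 ∧ ψ q • x' = q.2 := by
    rintro q ⟨t, rfl⟩
    have hex : ∃ t' : T, ((t • x, t • x') : X × X) = (t' • x, t' • x') := ⟨t, rfl⟩
    have h1 : ψ (t • x, t • x') = hex.choose := by
      simp only [hψdef]
      exact dif_pos hex
    have h2 := hex.choose_spec
    rw [Prod.mk.injEq] at h2
    exact ⟨by rw [h1, ← h2.1], by rw [h1, ← h2.2]⟩
  refine ⟨G.map ψ, ?_⟩
  have hfst : Filter.Tendsto Prod.fst (↑G : Filter (X × X)) (nhds z) :=
    (continuous_fst.tendsto ((z, z) : X × X)).mono_left hG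
  have hsnd : Filter.Tendsto Prod.snd (↑G : Filter (X × X)) (nhds z) :=
    (continuous_snd.tendsto ((z, z) : X × X)).mono_left hG
  have e1 : uact (G.map ψ) x = z := by
    apply uact_eq
    rw [Ultrafilter.coe_map, Filter.tendsto_map'_iff]
    refine hfst.congr' ?_
    filter_upwards [hSG] with q hq
    exact ((hψS q hq).1).symm
  have e2 : uact (G.map ψ) x' = z := by
    apply uact_eq
    rw [Ultrafilter.coe_map, Filter.tendsto_map'_iff]
    refine hsnd.congr' ?_
    filter_upwards [hSG] with q hq
    exact ((hψS q hq).2).symm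
  rw [e1, e2]

/-- For any `p`, there is `q ∈ M` with `(q * p) * u = u`. -/
theorem exists_mul_mul_eq {M : Set (Ultrafilter T)} (hM : IsMinimalLeftIdeal M)
    {u : Ultrafilter T} (hu : u ∈ M) (p : Ultrafilter T) :
    ∃ q ∈ M, (q * p) * u = u := by
  set N : Set (Ultrafilter T) := {r | ∃ q ∈ M, r = (q * p) * u} with hN
  have hNM : N = M := by
    refine hM.2 N ?_ ⟨⟨(u * p) * u, ⟨u, hu, rfl⟩⟩, ?_⟩
    · rintro r ⟨q, hq, rfl⟩
      exact hM.1.2 u hu _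
    · rintro r ⟨q, hq, rfl⟩ q'
      refine ⟨q' * q, hM.1.2 q hq q', ?_⟩
      rw [mul_assoc, mul_assoc, mul_assoc]
  have : u ∈ N := hNM.symm ▸ hu
  obtain ⟨q, hq, hqe⟩ := this
  exact ⟨q, hq, hqe.symm⟩

theorem proximal_of_uact_eq {u : Ultrafilter T} {x x' : X}
    (h : uact u x = uact u x') : IsProximal T x x' := by
  refine ⟨uact u x, ?_⟩
  have h1 := uact_tendsto u x
  have h2 := uact_tendsto u x'
  rw [← h] at h2
  have ht : Filter.Tendsto (fun t : T => ((t • x, t • x') : X × X)) ↑u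
      (nhds (uact u x, uact u x)) := h1.prodMk_nhds h2
  exact mem_closure_of_tendsto ht (Filter.Eventually.of_forall fun t => ⟨t, rfl⟩)

/-- Proximality of all fibers implies injectivity of `π` on `uX`. -/
theorem injOn_of_proximal {Y : Type*} [TopologicalSpace Y] [MulAction T Y]
    (hcX : ∀ t : T, Continuous fun x : X => t • x)
    (π : X → Y) {M : Set (Ultrafilter T)} (hM : IsMinimalLeftIdeal M)
    {u : Ultrafilter T} (hu : u ∈ M)
    (hprox : ∀ x x' : X, π x = π x' → IsProximal T x x') :
    Set.InjOn π (uact u '' Set.univ) := by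
  rintro x ⟨x₀, -, rfl⟩ x' ⟨x₀', -, rfl⟩ hπ
  obtain ⟨p, hp⟩ := exists_uact_eq_of_proximal (hprox _ _ hπ)
  obtain ⟨q, hq, hqu⟩ := exists_mul_mul_eq hM hu p
  calc uact u x₀ = uact ((q * p) * u) x₀ := by rw [hqu]
    _ = uact q (uact p (uact u x₀)) := by
        rw [uact_mul hcX, uact_mul hcX]
    _ = uact q (uact p (uact u x₀')) := by rw [hp]
    _ = uact ((q * p) * u) x₀' := by
        rw [uact_mul hcX, uact_mul hcX]
    _ = uact u x₀' := by rw [hqu]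

/-- The key lifting lemma for the circle operation along a factor map. -/
theorem circOp_image {Y : Type*} [TopologicalSpace Y] [CompactSpace Y] [T2Space Y]
    [MulAction T Y] (π : X → Y) (hπc : Continuous π)
    (hπeq : ∀ t : T, ∀ x : X, π (t • x) = t • π x)
    (d : ℕ) (u : Ultrafilter T) (B : Set (CubeStar d → X)) :
    circOp d u ((fun z : CubeStar d → X => fun ε => π (z ε)) '' B) =
      (fun z : CubeStar d → X => fun ε => π (z ε)) '' circOp d u B := by
  set SX : Set ((CubeStar d → Ultrafilter T) × (CubeStar d → X)) :=
    {q | ∃ f ∈ faceGroupStar T d, ∃ b ∈ B,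
      q = (fun ε => (pure (f ε) : Ultrafilter T), fun ε => f ε • b ε)} with hSX
  set SY : Set ((CubeStar d → Ultrafilter T) × (CubeStar d → Y)) :=
    {q | ∃ f ∈ faceGroupStar T d,
      ∃ b ∈ (fun z : CubeStar d → X => fun ε => π (z ε)) '' B,
      q = (fun ε => (pure (f ε) : Ultrafilter T), fun ε => f ε • b ε)} with hSY
  set Φ : (CubeStar d → Ultrafilter T) × (CubeStar d → X) →
      (CubeStar d → Ultrafilter T) × (CubeStar d → Y) :=
    fun q => (q.1, fun ε => π (q.2 ε)) with hΦ
  have hΦc : Continuous Φ := by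
    refine continuous_fst.prodMk (continuous_pi fun ε => ?_)
    exact hπc.comp ((continuous_apply ε).comp continuous_snd)
  have hΦS : Φ '' SX = SY := by
    ext q
    constructor
    · rintro ⟨⟨P, w⟩, ⟨f, hf, b, hb, hPw⟩, rfl⟩
      rw [Prod.mk.injEq] at hPw
      obtain ⟨rfl, rfl⟩ := hPw
      refine ⟨f, hf, fun ε => π (b ε), ⟨b, hb, rfl⟩, ?_⟩
      simp only [Φ, Prod.mk.injEq]
      exact ⟨by trivial, by funext ε; exact hπeq (f ε) (b ε)⟩
    · rintro ⟨f, hf, b', ⟨b, hb, rfl⟩, rfl⟩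
      refine ⟨(fun ε => (pure (f ε) : Ultrafilter T), fun ε => f ε • b ε),
        ⟨f, hf, b, hb, rfl⟩, ?_⟩
      simp only [Φ, Prod.mk.injEq]
      exact ⟨by trivial, by funext ε; exact hπeq (f ε) (b ε)⟩
  have hclosed : closure SY = Φ '' closure SX := by
    apply Set.Subset.antisymm
    · rw [← hΦS]
      exact closure_minimal (Set.image_mono subset_closure)
        (isClosed_closure.isCompact.image hΦc).isClosed
    · rw [← hΦS]
      exact image_closure_subset_closure_image hΦc
  ext w
  constructor
  · intro hw
    have hw' : (((fun _ => u) : CubeStar d → Ultrafilter T), w) ∈ closure SY := hw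
    rw [hclosed] at hw'
    obtain ⟨⟨P, z⟩, hmem, hΦeq⟩ := hw'
    have hP : P = (fun _ : CubeStar d => u) := congrArg Prod.fst hΦeq
    have hzw : (fun ε => π (z ε)) = w := congrArg Prod.snd hΦeq
    subst hP
    exact ⟨z, hmem, hzw⟩
  · rintro ⟨z, hz, rfl⟩
    show (((fun _ => u) : CubeStar d → Ultrafilter T), fun ε => π (z ε)) ∈ closure SY
    rw [hclosed]
    exact ⟨((fun _ => u), z), hz, rfl⟩

end Aux

/-- For a factor map `π` between minimal systems, the restriction `π_u` of `π` to
`uX` is `τ^[d]`-continuous; and it is a `τ^[d]`-homeomorphism onto `uY` iff `π` is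
a proximal factor. -/
theorem factor_restriction_tau_d_continuous_and_homeo_iff_proximal
    {T : Type*} [Group T]
    {X : Type*} [TopologicalSpace X] [CompactSpace X] [T2Space X] [MulAction T X]
    {Y : Type*} [TopologicalSpace Y] [CompactSpace Y] [T2Space Y] [MulAction T Y]
    (hcX : ∀ t : T, Continuous fun x : X => t • x)
    (hcY : ∀ t : T, Continuous fun y : Y => t • y)
    (hminX : ∀ x : X, Dense {x' : X | ∃ t : T, x' = t • x})
    (hminY : ∀ y : Y, Dense {y' : Y | ∃ t : T, y' = t • y})
    (π : X → Y) (hπc : Continuous π) (hπs : Function.Surjective π)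
    (hπeq : ∀ t : T, ∀ x : X, π (t • x) = t • π x)
    (d : ℕ) (M : Set (Ultrafilter T)) (hM : IsMinimalLeftIdeal M)
    (u : Ultrafilter T) (hu : u ∈ M) (hidem : u * u = u) :
    (∀ A : Set X, A ⊆ uact u '' Set.univ →
        π '' clTau d u A ⊆ clTau d u (π '' A)) ∧
    ((Set.BijOn π (uact u '' (Set.univ : Set X)) (uact u '' (Set.univ : Set Y)) ∧
        ∀ A : Set X, A ⊆ uact u '' Set.univ →
          π '' clTau d u A = clTau d u (π '' A)) ↔
      ∀ x x' : X, π x = π x' → IsProximal T x x') := by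
  have hcomm : ∀ (p : Ultrafilter T) (x : X), π (uact p x) = uact p (π x) :=
    fun p x => uact_comm π hπc hπeq p x
  -- the image of the diagonal of `π '' A` is the `π`-cube image of the diagonal of `A`
  have himg : ∀ A : Set X,
      (fun a : Y => fun _ : CubeStar d => a) '' (π '' A) =
        (fun z : CubeStar d → X => fun ε => π (z ε)) ''
          ((fun a : X => fun _ : CubeStar d => a) '' A) := by
    intro A
    rw [Set.image_image, Set.image_image]
  -- part (i)
  have part1 : ∀ A : Set X, π '' clTau d u A ⊆ clTau d u (π '' A) := by
    rintro A y ⟨x, hx, rfl⟩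
    obtain ⟨⟨x₀, -, rfl⟩, z, hz, hzeq⟩ := hx
    refine ⟨⟨π x₀, trivial, (hcomm u x₀).symm⟩, ?_⟩
    refine ⟨fun ε => π (z ε), ?_, ?_⟩
    · rw [himg A, circOp_image π hπc hπeq d u]
      exact ⟨z, hz, rfl⟩
    · funext ε
      show uact u (π (z ε)) = π (uact u x₀)
      have h1 : uact u (z ε) = uact u x₀ := congrFun hzeq ε
      rw [← hcomm u (z ε), h1]
  refine ⟨fun A _ => part1 A, ?_⟩
  constructor
  · rintro ⟨⟨-, hinj, -⟩, -⟩ x x' hxx'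
    have h1 : π (uact u x) = π (uact u x') := by
      rw [hcomm, hcomm, hxx']
    have h2 : uact u x = uact u x' :=
      hinj ⟨x, trivial, rfl⟩ ⟨x', trivial, rfl⟩ h1
    exact proximal_of_uact_eq h2
  · intro hprox
    have hinj : Set.InjOn π (uact u '' Set.univ) :=
      injOn_of_proximal hcX π hM hu hprox
    constructor
    · refine ⟨?_, hinj, ?_⟩
      · rintro y ⟨x₀, -, rfl⟩
        exact ⟨π x₀, trivial, (hcomm u x₀).symm⟩
      · rintro y ⟨y₀, -, rfl⟩
        obtain ⟨x₀, rfl⟩ := hπs y₀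
        exact ⟨uact u x₀, ⟨x₀, trivial, rfl⟩, hcomm u x₀⟩
    · intro A hA
      refine Set.Subset.antisymm (part1 A) ?_
      rintro y hy
      obtain ⟨⟨y₀, -, rfl⟩, w, hw, hweq⟩ := hy
      rw [himg A, circOp_image π hπc hπeq d u] at hw
      obtain ⟨z, hz, hzw⟩ := hw
      have hval : ∀ ε : CubeStar d, π (uact u (z ε)) = uact u y₀ := by
        intro ε
        have hzw' : π (z ε) = w ε := congrFun hzw ε
        have hweq' : uact u (w ε) = uact u y₀ := congrFun hweq ε
        rw [hcomm u (z ε), hzw', hweq']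
      by_cases hne : Nonempty (CubeStar d)
      · obtain ⟨ε₀⟩ := hne
        refine ⟨uact u (z ε₀), ⟨⟨z ε₀, trivial, rfl⟩, z, hz, ?_⟩, hval ε₀⟩
        funext ε
        show uact u (z ε) = uact u (z ε₀)
        exact hinj ⟨z ε, trivial, rfl⟩ ⟨z ε₀, trivial, rfl⟩
          (by rw [hval ε, hval ε₀])
      · obtain ⟨x₀, rfl⟩ := hπs y₀
        refine ⟨uact u x₀, ⟨⟨x₀, trivial, rfl⟩, z, hz, ?_⟩, hcomm u x₀⟩
        funext ε
        exact absurd ⟨ε⟩ hne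
end
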